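/- Suppose J = 0 and the five algebraic conditions u1 = ... = u5 = 0 from the Chazy XII parameter system hold (with A = α1²-α², B = β1²-β², C = γ1²-A-B-γ², γ1 = 1-α1-β1). Then there is no solution with α, β, γ each equal to 0 or a reciprocal of a positive integer, α+β+γ < 1, and 0 ≤ α1, β1 ≤ 1. -/
import Mathlib

private lemma sq_eq_of_nonneg' {a b : ℝ} (ha : 0 ≤ a) (hb : 0 ≤ b) (h : a ^ 2 = b ^ 2) :
    a = b := by
  have h2 : (a - b) * (a + b) = 0 := by linear_combination h
  rcases mul_eq_zero.mp h2 with h' | h' <;> linarith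

set_option maxHeartbeats 1000000 in
theorem no_solution_J_zero (α β γ α1 β1 γ1 J A B C : ℝ)
    (hJ : J = 0)
    (hγ1 : γ1 = 1 - α1 - β1)
    (hA : A = α1 ^ 2 - α ^ 2) (hB : B = β1 ^ 2 - β ^ 2)
    (hC : C = γ1 ^ 2 - A - B - γ ^ 2)
    (hu1 : J * B ^ 2 - 12 * B * β1 ^ 2 = 0)
    (hu2 : 2 * J * B * C - 4 * ((1 - α1) * (1 - 6 * β1) * B
        + (1/2) * (1 - 2 * β1) * (1 - 3 * β1) * C) = 0)
    (hu3 : J * (2 * A * B + C ^ 2) - 4 * ((2 - 3 * β1) * (1 - β1) * A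
        + (2 - 3 * α1) * (1 - α1) * B
        + (1/2) * ((2 - 3 * β1) * (1 - 2 * α1) + (2 - 3 * α1) * (1 - 2 * β1)) * C) = 0)
    (hu4 : 2 * J * A * C - 4 * ((1 - β1) * (1 - 6 * α1) * A
        + (1/2) * (1 - 2 * α1) * (1 - 3 * α1) * C) = 0)
    (hu5 : J * A ^ 2 - 12 * A * α1 ^ 2 = 0)
    (hα : α = 0 ∨ ∃ n : ℕ, 1 ≤ n ∧ α = 1 / n)
    (hβ : β = 0 ∨ ∃ n : ℕ, 1 ≤ n ∧ β = 1 / n)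
    (hγ : γ = 0 ∨ ∃ n : ℕ, 1 ≤ n ∧ γ = 1 / n)
    (hsum : α + β + γ < 1)
    (hα1 : 0 ≤ α1 ∧ α1 ≤ 1) (hβ1 : 0 ≤ β1 ∧ β1 ≤ 1) :
    False := by
  -- nonnegativity
  have h0α : 0 ≤ α := by
    rcases hα with h | ⟨n, hn, h⟩
    · simp [h]
    · subst h; positivity
  have h0β : 0 ≤ β := by
    rcases hβ with h | ⟨n, hn, h⟩
    · simp [h]
    · subst h; positivity
  have h0γ : 0 ≤ γ := by
    rcases hγ with h | ⟨n, hn, h⟩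
    · simp [h]
    · subst h; positivity
  obtain ⟨hα1l, hα1r⟩ := hα1
  obtain ⟨hβ1l, hβ1r⟩ := hβ1
  subst hJ hγ1 hC hA hB
  -- from u1, u5 with J = 0
  have hBβ : β1 ^ 2 - β ^ 2 = 0 ∨ β1 = 0 := by
    have h : (β1 ^ 2 - β ^ 2) * β1 ^ 2 = 0 := by linear_combination (-1/12 : ℝ) * hu1
    rcases mul_eq_zero.mp h with h | h
    · exact Or.inl h
    · exact Or.inr (pow_eq_zero_iff two_ne_zero |>.mp h)
  have hAα : α1 ^ 2 - α ^ 2 = 0 ∨ α1 = 0 := by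
    have h : (α1 ^ 2 - α ^ 2) * α1 ^ 2 = 0 := by linear_combination (-1/12 : ℝ) * hu5
    rcases mul_eq_zero.mp h with h | h
    · exact Or.inl h
    · exact Or.inr (pow_eq_zero_iff two_ne_zero |>.mp h)
  rcases hAα with hA0 | hα10 <;> rcases hBβ with hB0 | hβ10
  · -- Case A = 0, B = 0
    have hαα : α1 = α := sq_eq_of_nonneg' hα1l h0α (by linarith)
    have hββ : β1 = β := sq_eq_of_nonneg' hβ1l h0β (by linarith)
    have hu2' : (1 - 2*β1) * (1 - 3*β1) * ((1-α1-β1)^2 - (α1^2-α^2) - (β1^2-β^2) - γ^2) = 0 := by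
      linear_combination (-1/2 : ℝ) * hu2 - 2*(1-α1)*(1-6*β1) * hB0
    have hu4' : (1 - 2*α1) * (1 - 3*α1) * ((1-α1-β1)^2 - (α1^2-α^2) - (β1^2-β^2) - γ^2) = 0 := by
      linear_combination (-1/2 : ℝ) * hu4 - 2*(1-β1)*(1-6*α1) * hA0
    have hu3' : ((2-3*β1)*(1-2*α1) + (2-3*α1)*(1-2*β1))
        * ((1-α1-β1)^2 - (α1^2-α^2) - (β1^2-β^2) - γ^2) = 0 := by
      linear_combination (-1/2 : ℝ) * hu3 - 2*(2-3*β1)*(1-β1) * hA0 - 2*(2-3*α1)*(1-α1) * hB0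
    by_cases hC0 : (1-α1-β1)^2 - (α1^2-α^2) - (β1^2-β^2) - γ^2 = 0
    · -- C = 0 : γ² = (1-α-β)²
      have hg : (γ - (1 - α - β)) * (γ + (1 - α - β)) = 0 := by
        rw [hαα, hββ] at hC0
        linear_combination -hC0
      rcases mul_eq_zero.mp hg with h | h <;> linarith
    · have hf2 : (1 - 2*β1) * (1 - 3*β1) = 0 := by
        rcases mul_eq_zero.mp hu2' with h | h
        · exact h
        · exact absurd h hC0
      have hf4 : (1 - 2*α1) * (1 - 3*α1) = 0 := by
        rcases mul_eq_zero.mp hu4' with h | h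
        · exact h
        · exact absurd h hC0
      have hβ1v : β1 = 1/2 ∨ β1 = 1/3 := by
        rcases mul_eq_zero.mp hf2 with h | h
        · left; linarith
        · right; linarith
      have hα1v : α1 = 1/2 ∨ α1 = 1/3 := by
        rcases mul_eq_zero.mp hf4 with h | h
        · left; linarith
        · right; linarith
      rcases hα1v with h1 | h1 <;> rcases hβ1v with h2 | h2
      · linarith [hαα, hββ]
      · refine hC0 ?_; rw [h1, h2] at hu3' ⊢; linarith
      · refine hC0 ?_; rw [h1, h2] at hu3' ⊢; linarith
      · refine hC0 ?_; rw [h1, h2] at hu3' ⊢; linarith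
  · -- Case A = 0, β1 = 0
    subst hβ10
    have hαα : α1 = α := sq_eq_of_nonneg' hα1l h0α (by linarith)
    have hkey : (1 - α1) * ((0:ℝ) ^ 2 - β ^ 2) * (4*α1 - 2) = 0 := by
      linear_combination (-1/4 : ℝ) * hu3 - 2 * hA0 + ((4 - 7*α1)/4) * hu2
    rcases mul_eq_zero.mp hkey with h | h
    · rcases mul_eq_zero.mp h with h | h
      · -- α1 = 1, so α = 1
        have h1 : (α - 1) * (α + 1) = 0 := by linear_combination -hA0 - (α1 + 1) * h
        rcases mul_eq_zero.mp h1 with h' | h' <;> linarith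
      · -- B = 0, so β = 0, then C = 0
        have hβ0 : β = 0 := by
          have : β ^ 2 = 0 := by linarith
          exact pow_eq_zero_iff two_ne_zero |>.mp this
        have hCx : (1 - α1 - 0) ^ 2 - (α1 ^ 2 - α ^ 2) - ((0:ℝ) ^ 2 - β ^ 2) - γ ^ 2 = 0 := by
          linear_combination (-1/2 : ℝ) * hu2 - 2 * (1 - α1) * h
        have hg : (γ - (1 - α)) * (γ + (1 - α)) = 0 := by
          rw [hαα] at hCx
          linear_combination -hCx - h
        rcases mul_eq_zero.mp hg with h' | h' <;> linarith
    · -- α1 = 1/2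
      have hα1v : α1 = 1/2 := by linarith
      rw [hα1v] at hA0 hu2
      have hαv : α = 1/2 := by rw [hα1v] at hαα; linarith
      have hg : (γ - 1/2) * (γ + 1/2) = 0 := by
        linear_combination (1/2 : ℝ) * hu2 - hA0
      rcases mul_eq_zero.mp hg with h' | h' <;> linarith
  · -- Case α1 = 0, B = 0
    subst hα10
    have hββ : β1 = β := sq_eq_of_nonneg' hβ1l h0β (by linarith)
    have hkey : (1 - β1) * ((0:ℝ) ^ 2 - α ^ 2) * (4*β1 - 2) = 0 := by
      linear_combination (-1/4 : ℝ) * hu3 - 2 * hB0 + ((4 - 7*β1)/4) * hu4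
    rcases mul_eq_zero.mp hkey with h | h
    · rcases mul_eq_zero.mp h with h | h
      · -- β1 = 1, so β = 1
        have h1 : (β - 1) * (β + 1) = 0 := by linear_combination -hB0 - (β1 + 1) * h
        rcases mul_eq_zero.mp h1 with h' | h' <;> linarith
      · -- A = 0, so α = 0, then C = 0
        have hα0 : α = 0 := by
          have : α ^ 2 = 0 := by linarith
          exact pow_eq_zero_iff two_ne_zero |>.mp this
        have hCx : (1 - 0 - β1) ^ 2 - ((0:ℝ) ^ 2 - α ^ 2) - (β1 ^ 2 - β ^ 2) - γ ^ 2 = 0 := by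
          linear_combination (-1/2 : ℝ) * hu4 - 2 * (1 - β1) * h
        have hg : (γ - (1 - β)) * (γ + (1 - β)) = 0 := by
          rw [hββ] at hCx
          linear_combination -hCx - h
        rcases mul_eq_zero.mp hg with h' | h' <;> linarith
    · -- β1 = 1/2
      have hβ1v : β1 = 1/2 := by linarith
      rw [hβ1v] at hB0 hu4
      have hβv : β = 1/2 := by rw [hβ1v] at hββ; linarith
      have hg : (γ - 1/2) * (γ + 1/2) = 0 := by
        linear_combination (1/2 : ℝ) * hu4 - hB0
      rcases mul_eq_zero.mp hg with h' | h' <;> linarith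
  · -- Case α1 = 0, β1 = 0
    subst hα10 hβ10
    have hg : (γ - 1) * (γ + 1) = 0 := by
      linear_combination (1/4 : ℝ) * hu2 + (1/4 : ℝ) * hu4
    rcases mul_eq_zero.mp hg with h' | h' <;> linarith
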